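/- Let d be an odd prime, q = exp(2πi/d), P₀ the DFT matrix with entries d^{-1/2} q^{jk}, D = diag(q^{j(j+1)/2}), and P_k := D^{-k} P₀ for k = 0,...,d-1. Then the d+1 orthonormal bases of C^d given by the standard basis together with the columns of P₀, P₁, ..., P_{d-1} are pairwise mutually unbiased: for any two distinct bases B, B' in this family and any b ∈ B, b' ∈ B', |⟨b, b'⟩| = d^{-1/2}. -/

import Mathlib

open Matrix Finset
open scoped ComplexConjugate

namespace S15

noncomputable def ψ (q : ℂ) (d : ℕ) : ZMod d → ℂ := fun x => q ^ ((x.val : ℤ))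

def τ (d : ℕ) : ZMod d → ZMod d := fun x => x * (x + 1) * (2 : ZMod d)⁻¹

variable {d : ℕ} {q : ℂ}

section basic
variable [NeZero d] (hprim : IsPrimitiveRoot q d)
include hprim

lemma q_ne_zero : q ≠ 0 := hprim.ne_zero (NeZero.ne d)

lemma psi_intCast (n : ℤ) : ψ q d (n : ZMod d) = q ^ n := by
  have hdvd : (d : ℤ) ∣ n - (((n : ZMod d)).val : ℤ) := by
    have h0 : ((n - (((n : ZMod d)).val : ℤ) : ℤ) : ZMod d) = 0 := by
      push_cast
      rw [ZMod.natCast_val, ZMod.cast_id]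
      ring
    exact (ZMod.intCast_zmod_eq_zero_iff_dvd _ _).mp h0
  obtain ⟨c, hc⟩ := hdvd
  have hn : n = (((n : ZMod d)).val : ℤ) + (d : ℤ) * c := by linarith
  have h1 : q ^ ((d : ℤ) * c) = 1 :=
    (hprim.zpow_eq_one_iff_dvd _).mpr ⟨c, rfl⟩
  rw [ψ]
  conv_rhs => rw [hn]
  rw [zpow_add₀ (q_ne_zero hprim), h1, mul_one]

lemma psi_add (x y : ZMod d) : ψ q d (x + y) = ψ q d x * ψ q d y := by
  have hx : (((x.val : ℤ)) : ZMod d) = x := by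
    push_cast; rw [ZMod.natCast_val, ZMod.cast_id]
  have hy : (((y.val : ℤ)) : ZMod d) = y := by
    push_cast; rw [ZMod.natCast_val, ZMod.cast_id]
  have : x + y = (((x.val : ℤ) + (y.val : ℤ) : ℤ) : ZMod d) := by
    push_cast [hx, hy]
    rfl
  rw [this, psi_intCast hprim, zpow_add₀ (q_ne_zero hprim)]
  rfl

lemma psi_zero : ψ q d 0 = 1 := by
  simp [ψ, ZMod.val_zero]

lemma psi_ne_zero (x : ZMod d) : ψ q d x ≠ 0 := by
  unfold ψ
  exact zpow_ne_zero _ (q_ne_zero hprim)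

lemma psi_mul_neg (x : ZMod d) : ψ q d x * ψ q d (-x) = 1 := by
  rw [← psi_add hprim, add_neg_cancel, psi_zero hprim]

lemma abs_q : ‖q‖ = 1 :=
  Complex.norm_eq_one_of_pow_eq_one hprim.pow_eq_one (NeZero.ne d)

lemma abs_psi (x : ZMod d) : ‖ψ q d x‖ = 1 := by
  rw [ψ, norm_zpow, abs_q hprim, _root_.one_zpow]

lemma conj_q_zpow (n : ℤ) : conj (q ^ n) = q ^ (-n) := by
  have h : q * conj q = 1 := by
    have := Complex.mul_conj q
    rw [Complex.normSq_eq_norm_sq, abs_q hprim] at this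
    simpa using this
  have hc : conj q = q⁻¹ := (inv_eq_of_mul_eq_one_right h).symm
  rw [map_zpow₀, hc, _root_.inv_zpow, ← _root_.zpow_neg]

lemma conj_psi (x : ZMod d) : conj (ψ q d x) = ψ q d (-x) := by
  have h1 : ψ q d x * conj (ψ q d x) = 1 := by
    rw [Complex.mul_conj, Complex.normSq_eq_norm_sq, abs_psi hprim]
    norm_num
  have h2 := psi_mul_neg hprim x
  exact mul_left_cancel₀ (psi_ne_zero hprim x) (h1.trans h2.symm)

lemma psi_eq_one_iff (x : ZMod d) : ψ q d x = 1 ↔ x = 0 := by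
  constructor
  · intro h
    rw [ψ, hprim.zpow_eq_one_iff_dvd] at h
    have : (d : ℕ) ∣ x.val := by exact_mod_cast h
    have hlt : x.val < d := ZMod.val_lt x
    have hv : x.val = 0 := Nat.eq_zero_of_dvd_of_lt this hlt
    exact (ZMod.val_eq_zero x).mp hv  
  · intro h; rw [h, psi_zero hprim]

lemma sum_psi_mul (c : ZMod d) :
    ∑ x : ZMod d, ψ q d (c * x) = if c = 0 then (d : ℂ) else 0 := by
  split_ifs with hc
  · subst hc
    simp [psi_zero hprim, Finset.sum_const, ZMod.card]
  · set S := ∑ x : ZMod d, ψ q d (c * x) with hS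
    have key : ψ q d c * S = S := by
      rw [hS, Finset.mul_sum]
      calc ∑ x : ZMod d, ψ q d c * ψ q d (c * x)
          = ∑ x : ZMod d, ψ q d (c * (x + 1)) := by
            refine Finset.sum_congr rfl fun x _ => ?_
            rw [← psi_add hprim]
            congr 1
            ring
        _ = ∑ x : ZMod d, ψ q d (c * x) :=
            Fintype.sum_equiv (Equiv.addRight (1 : ZMod d)) _ _ (fun x => rfl)
    have h0 : (ψ q d c - 1) * S = 0 := by linear_combination key
    rcases mul_eq_zero.mp h0 with h | h
    · exfalso
      exact hc ((psi_eq_one_iff hprim c).mp (by linear_combination h))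
    · exact h
end basic

lemma fin_sum_zmod [NeZero d] (f : ZMod d → ℂ) :
    ∑ k : Fin d, f ((k : ℕ) : ZMod d) = ∑ x : ZMod d, f x := by
  apply Fintype.sum_bijective (fun k : Fin d => ((k : ℕ) : ZMod d)) ?_ _ _ (fun k => rfl)
  refine (Fintype.bijective_iff_injective_and_card _).mpr ⟨?_, by simp [ZMod.card]⟩
  intro k l h
  have := congrArg ZMod.val h
  rw [ZMod.val_cast_of_lt k.2, ZMod.val_cast_of_lt l.2] at this
  exact Fin.ext this

lemma tau_zero : τ d 0 = 0 := by simp [τ]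

section gauss
variable [Fact d.Prime] (hprim : IsPrimitiveRoot q d) (h2 : (2 : ZMod d) ≠ 0)

include h2 in
lemma tau_add (y m : ZMod d) : τ d (y + m) = τ d y + y * m + τ d m := by
  simp only [τ]
  field_simp
  ring

include hprim h2

lemma gauss_sq (t s : ZMod d) (ht : t ≠ 0) :
    (∑ x : ZMod d, ψ q d (t * τ d x + s * x)) *
      conj (∑ x : ZMod d, ψ q d (t * τ d x + s * x)) = (d : ℂ) := by
  rw [map_sum, Finset.sum_mul_sum, Finset.sum_comm]
  have step1 : ∀ y : ZMod d,
      ∑ x : ZMod d, ψ q d (t * τ d x + s * x) * conj (ψ q d (t * τ d y + s * y))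
        = ∑ m : ZMod d, ψ q d (t * τ d m + s * m) * ψ q d ((t * m) * y) := by
    intro y
    rw [← Fintype.sum_equiv (Equiv.addLeft y)
      (fun m => ψ q d (t * τ d (y + m) + s * (y + m)) * conj (ψ q d (t * τ d y + s * y)))
      (fun x => ψ q d (t * τ d x + s * x) * conj (ψ q d (t * τ d y + s * y)))
      (fun m => rfl)]
    refine Finset.sum_congr rfl fun m _ => ?_
    rw [conj_psi hprim, ← psi_add hprim, ← psi_add hprim]
    congr 1
    rw [tau_add h2]
    ring
  rw [Finset.sum_congr rfl fun y _ => step1 y, Finset.sum_comm]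
  have step2 : ∀ m : ZMod d,
      ∑ y : ZMod d, ψ q d (t * τ d m + s * m) * ψ q d ((t * m) * y)
        = if m = 0 then (d : ℂ) else 0 := by
    intro m
    rw [← Finset.mul_sum, sum_psi_mul hprim]
    by_cases hm : m = 0
    · subst hm
      simp [tau_zero, psi_zero hprim]
    · have htm : t * m ≠ 0 := mul_ne_zero ht hm
      simp [htm, hm]
  rw [Finset.sum_congr rfl fun m _ => step2 m]
  simp

lemma gauss_abs (t s : ZMod d) (ht : t ≠ 0) :
    ‖∑ x : ZMod d, ψ q d (t * τ d x + s * x)‖ = Real.sqrt d := by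
  set S := ∑ x : ZMod d, ψ q d (t * τ d x + s * x) with hS
  have hns : (Complex.normSq S : ℂ) = (d : ℂ) := by
    rw [← Complex.mul_conj]
    exact gauss_sq hprim h2 t s ht
  have hns' : Complex.normSq S = (d : ℝ) := by exact_mod_cast hns
  rw [Complex.norm_def, hns']
end gauss

lemma two_ne_zero_zmod (hd : d.Prime) (hodd : Odd d) : (2 : ZMod d) ≠ 0 := by
  intro h
  have h1 : ((2 : ℕ) : ZMod d) = 0 := by exact_mod_cast h
  have h2 : d ∣ 2 := (ZMod.natCast_eq_zero_iff 2 d).mp h1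
  have h3 : d = 2 := (Nat.prime_dvd_prime_iff_eq hd Nat.prime_two).mp h2
  obtain ⟨k, hk⟩ := hodd
  omega

lemma sum_fin_q [NeZero d] (hprim : IsPrimitiveRoot q d) (c : ℤ) :
    ∑ k : Fin d, q ^ (c * ((k : ℕ) : ℤ)) = if (d : ℤ) ∣ c then (d : ℂ) else 0 := by
  have hterm : ∀ k : Fin d,
      q ^ (c * ((k : ℕ) : ℤ)) = ψ q d ((c : ZMod d) * (((k : ℕ) : ZMod d))) := by
    intro k
    rw [show (c : ZMod d) * (((k : ℕ) : ZMod d)) = ((c * ((k : ℕ) : ℤ) : ℤ) : ZMod d) by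
      push_cast; ring]
    rw [psi_intCast hprim]
  rw [Finset.sum_congr rfl fun k _ => hterm k,
    fin_sum_zmod (fun x => ψ q d ((c : ZMod d) * x)), sum_psi_mul hprim]
  by_cases hc : (d : ℤ) ∣ c
  · rw [if_pos hc, if_pos ((ZMod.intCast_zmod_eq_zero_iff_dvd c d).mpr hc)]
  · rw [if_neg hc, if_neg (fun h0 => hc ((ZMod.intCast_zmod_eq_zero_iff_dvd c d).mp h0))]

lemma gauss_fin [Fact d.Prime] (hodd : Odd d) (hprim : IsPrimitiveRoot q d)
    (t s : ℤ) (ht : ¬ (d : ℤ) ∣ t) :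
    ‖∑ k : Fin d, q ^ (t * (((k : ℕ) * ((k : ℕ) + 1) / 2 : ℕ) : ℤ)
      + s * ((k : ℕ) : ℤ))‖ = Real.sqrt d := by
  have hd : d.Prime := Fact.out
  have h2 : (2 : ZMod d) ≠ 0 := two_ne_zero_zmod hd hodd
  have ht' : (t : ZMod d) ≠ 0 := fun h0 => ht ((ZMod.intCast_zmod_eq_zero_iff_dvd t d).mp h0)
  have hz : ∀ k : Fin d, (((k : ℕ) * ((k : ℕ) + 1) / 2 : ℕ) : ZMod d)
      = τ d ((k : ℕ) : ZMod d) := by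
    intro k
    have h2d : ((k : ℕ) * ((k : ℕ) + 1) / 2 : ℕ) * 2 = (k : ℕ) * ((k : ℕ) + 1) :=
      Nat.div_mul_cancel (even_iff_two_dvd.mp (Nat.even_mul_succ_self _))
    have hcast := congrArg (Nat.cast : ℕ → ZMod d) h2d
    push_cast at hcast
    show (((k : ℕ) * ((k : ℕ) + 1) / 2 : ℕ) : ZMod d)
      = ((k : ℕ) : ZMod d) * (((k : ℕ) : ZMod d) + 1) * (2 : ZMod d)⁻¹
    rw [eq_mul_inv_iff_mul_eq₀ h2]
    exact hcast
  have hterm : ∀ k : Fin d,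
      q ^ (t * (((k : ℕ) * ((k : ℕ) + 1) / 2 : ℕ) : ℤ) + s * ((k : ℕ) : ℤ))
        = ψ q d ((t : ZMod d) * τ d ((k : ℕ) : ZMod d)
            + (s : ZMod d) * ((k : ℕ) : ZMod d)) := by
    intro k
    rw [← psi_intCast hprim]
    congr 1
    rw [← hz k]
    set n : ℕ := (k : ℕ) * ((k : ℕ) + 1) / 2 with hn
    push_cast
    ring
  rw [Finset.sum_congr rfl fun k _ => hterm k,
    fin_sum_zmod (fun x => ψ q d ((t : ZMod d) * τ d x + (s : ZMod d) * x)),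
    gauss_abs hprim h2 _ _ ht']

end S15

open S15 in
theorem stmt_15 (d : ℕ) (hd : d.Prime) (hodd : Odd d) (q : ℂ)
    (hq : q = Complex.exp (2 * Real.pi * Complex.I / d))
    (D P₀ : Matrix (Fin d) (Fin d) ℂ)
    (hD : D = Matrix.diagonal fun j : Fin d => q ^ ((j : ℕ) * ((j : ℕ) + 1) / 2))
    (hP₀ : P₀ = Matrix.of fun j k : Fin d => ((1 / Real.sqrt d : ℝ) : ℂ) * q ^ ((j : ℕ) * (k : ℕ)))
    (Q : Fin (d + 1) → Matrix (Fin d) (Fin d) ℂ)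
    (hQ : Q = fun a : Fin (d + 1) => if (a : ℕ) = 0 then (1 : Matrix (Fin d) (Fin d) ℂ)
      else D ^ (-(((a : ℕ) : ℤ) - 1)) * P₀) :
    (∀ a, Q a ∈ Matrix.unitaryGroup (Fin d) ℂ) ∧
      ∀ a b : Fin (d + 1), a ≠ b →
        ∀ i j, ‖((Q a)ᴴ * Q b) i j‖ = 1 / Real.sqrt d := by
  haveI hfact : Fact d.Prime := ⟨hd⟩
  haveI : NeZero d := ⟨hd.ne_zero⟩
  have hprim : IsPrimitiveRoot q d := by
    rw [hq]; exact Complex.isPrimitiveRoot_exp d hd.ne_zero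
  have hq0 : q ≠ 0 := q_ne_zero hprim
  have habs : ‖q‖ = 1 := abs_q hprim
  have hd0 : 0 < d := hd.pos
  have hdR : (0:ℝ) < d := by exact_mod_cast hd0
  have hsqrt_pos : 0 < Real.sqrt d := Real.sqrt_pos.mpr hdR
  set C : ℂ := ((1 / Real.sqrt d : ℝ) : ℂ) with hC
  set T : Fin d → ℕ := fun j => (j : ℕ) * ((j : ℕ) + 1) / 2 with hT
  -- D ^ (-(m : ℤ)) as a diagonal matrix
  have hDm : ∀ m : ℕ, D ^ (-(m : ℤ))
      = Matrix.diagonal (fun j => q ^ (-((m * T j : ℕ) : ℤ))) := by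
    intro m
    rw [Matrix.zpow_neg_natCast, hD, Matrix.diagonal_pow]
    refine Matrix.inv_eq_left_inv ?_
    rw [Matrix.diagonal_mul_diagonal]
    ext i j
    by_cases hij : i = j
    · subst hij
      rw [Matrix.diagonal_apply_eq, Matrix.one_apply_eq]
      show q ^ (-((m * T i : ℕ) : ℤ)) * (q ^ T i) ^ m = 1
      rw [← pow_mul, ← zpow_natCast q (T i * m), ← zpow_add₀ hq0,
        show (-((m * T i : ℕ) : ℤ) + ((T i * m : ℕ) : ℤ)) = 0 by push_cast; ring, zpow_zero]
    · rw [Matrix.diagonal_apply_ne _ hij, Matrix.one_apply_ne hij]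
  -- entry formula for Q a with a ≠ 0
  have hQa : ∀ a : Fin (d + 1), (a : ℕ) ≠ 0 → ∀ i j : Fin d,
      Q a i j = C * q ^ (-(((((a : ℕ) - 1) * T i : ℕ)) : ℤ) + (((i : ℕ) * (j : ℕ) : ℕ) : ℤ)) := by
    intro a ha i j
    have h1 : 1 ≤ (a : ℕ) := Nat.one_le_iff_ne_zero.mpr ha
    have hexp : (-(((a : ℕ) : ℤ) - 1)) = -((((a : ℕ) - 1 : ℕ)) : ℤ) := by
      push_cast [h1]; ring
    rw [hQ]
    simp only [ha, if_false]
    rw [hexp, hDm, Matrix.diagonal_mul, hP₀]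
    show q ^ (-(((((a : ℕ) - 1) * T i : ℕ)) : ℤ)) * (C * q ^ ((i : ℕ) * (j : ℕ))) = _
    rw [← zpow_natCast q ((i : ℕ) * (j : ℕ)), ← mul_assoc, mul_comm _ C, mul_assoc,
      ← zpow_add₀ hq0]
  -- key formula for entries of (Q a)ᴴ * Q b, a b ≠ 0
  have hC2 : C * C = ((1 / (d : ℝ) : ℝ) : ℂ) := by
    rw [hC, ← Complex.ofReal_mul, div_mul_div_comm, one_mul,
      Real.mul_self_sqrt (le_of_lt hdR)]
  have hent : ∀ a b : Fin (d + 1), (a : ℕ) ≠ 0 → (b : ℕ) ≠ 0 → ∀ i j : Fin d,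
      ((Q a)ᴴ * Q b) i j = ((1 / (d : ℝ) : ℝ) : ℂ) *
        ∑ k : Fin d, q ^ (((((a : ℕ) - 1 : ℕ) : ℤ) - (((b : ℕ) - 1 : ℕ) : ℤ)) * ((T k : ℕ) : ℤ)
          + ((((j : ℕ) : ℤ)) - (((i : ℕ) : ℤ))) * ((k : ℕ) : ℤ)) := by
    intro a b ha hb i j
    rw [Matrix.mul_apply, Finset.mul_sum]
    refine Finset.sum_congr rfl fun k _ => ?_
    rw [Matrix.conjTranspose_apply, hQa a ha k i, hQa b hb k j]
    rw [star_mul']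
    have hCstar : star C = C := by rw [hC, RCLike.star_def, Complex.conj_ofReal]
    rw [hCstar]
    show C * star (q ^ _) * (C * q ^ _) = _
    rw [show ∀ (z w : ℂ), C * z * (C * w) = (C * C) * (z * w) by intros; ring, hC2]
    congr 1
    rw [show (star (q ^ (-(((((a : ℕ) - 1) * T k : ℕ)) : ℤ) + (((k : ℕ) * (i : ℕ) : ℕ) : ℤ)))
        : ℂ) = conj (q ^ (-(((((a : ℕ) - 1) * T k : ℕ)) : ℤ) + (((k : ℕ) * (i : ℕ) : ℕ) : ℤ)))
        from rfl,
      conj_q_zpow hprim, ← zpow_add₀ hq0]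
    congr 1
    push_cast
    ring
  have habs_zpow : ∀ z : ℤ, ‖q ^ z‖ = 1 := by
    intro z; rw [norm_zpow, habs, _root_.one_zpow]
  have hCabs : ‖C‖ = 1 / Real.sqrt d := by
    rw [hC, Complex.norm_of_nonneg (by positivity)]
  constructor
  · -- unitarity
    intro a
    by_cases ha : (a : ℕ) = 0
    · rw [Matrix.mem_unitaryGroup_iff, hQ]
      simp [ha]
    · rw [Matrix.mem_unitaryGroup_iff']
      have : star (Q a) = (Q a)ᴴ := rfl
      rw [this]
      ext i j
      rw [hent a a ha ha i j]
      have hsum : ∀ k : Fin d,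
          q ^ (((((a : ℕ) - 1 : ℕ) : ℤ) - (((a : ℕ) - 1 : ℕ) : ℤ)) * ((T k : ℕ) : ℤ)
            + ((((j : ℕ) : ℤ)) - (((i : ℕ) : ℤ))) * ((k : ℕ) : ℤ))
          = q ^ (((((j : ℕ) : ℤ)) - (((i : ℕ) : ℤ))) * ((k : ℕ) : ℤ)) := by
        intro k; congr 1; ring
      rw [Finset.sum_congr rfl fun k _ => hsum k, sum_fin_q hprim]
      by_cases hij : i = j
      · subst hij
        rw [if_pos (by simp)]
        rw [Matrix.one_apply_eq]
        have : ((d : ℝ) : ℂ) = (d : ℂ) := by push_cast; ring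
        rw [show ((1 / (d : ℝ) : ℝ) : ℂ) * (d : ℂ) = 1 by
          push_cast; field_simp; exact div_self (Nat.cast_ne_zero.mpr hd.ne_zero)]
      · rw [if_neg, Matrix.one_apply_ne hij]
        · ring
        · intro hdvd
          have hi : (i : ℕ) < d := i.isLt
          have hj : (j : ℕ) < d := j.isLt
          have hne : (i : ℕ) ≠ (j : ℕ) := fun h => hij (Fin.ext h)
          rcases lt_trichotomy ((((j : ℕ) : ℤ)) - (((i : ℕ) : ℤ))) 0 with h | h | h
          · have := Int.le_of_dvd (by omega) (dvd_neg.mpr hdvd); omega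
          · omega
          · have := Int.le_of_dvd h hdvd; omega
  · -- unbiasedness
    intro a b hab i j
    by_cases ha : (a : ℕ) = 0
    · by_cases hb : (b : ℕ) = 0
      · exact absurd (Fin.ext (ha.trans hb.symm)) hab
      · have hQ1 : Q a = 1 := by rw [hQ]; simp [ha]
        rw [hQ1]
        simp only [Matrix.conjTranspose_one, Matrix.one_mul]
        rw [hQa b hb i j, norm_mul, hCabs, habs_zpow, mul_one]
    · by_cases hb : (b : ℕ) = 0
      · have hQ1 : Q b = 1 := by rw [hQ]; simp [hb]
        rw [hQ1, Matrix.mul_one, Matrix.conjTranspose_apply]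
        have : ‖star (Q a j i)‖ = ‖Q a j i‖ := by
          rw [RCLike.star_def, Complex.norm_conj]
        rw [this, hQa a ha j i, norm_mul, hCabs, habs_zpow, mul_one]
      · -- both nonzero
        rw [hent a b ha hb i j, norm_mul]
        have haV : (a : ℕ) ≠ (b : ℕ) := fun h => hab (Fin.ext h)
        have hma : (a : ℕ) < d + 1 := a.isLt
        have hmb : (b : ℕ) < d + 1 := b.isLt
        have ht : ¬ (d : ℤ) ∣ ((((a : ℕ) - 1 : ℕ) : ℤ) - (((b : ℕ) - 1 : ℕ) : ℤ)) := by
          intro hdvd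
          rcases lt_trichotomy ((((a : ℕ) - 1 : ℕ) : ℤ) - (((b : ℕ) - 1 : ℕ) : ℤ)) 0
            with h | h | h
          · have := Int.le_of_dvd (by omega) (dvd_neg.mpr hdvd); omega
          · omega
          · have := Int.le_of_dvd h hdvd; omega
        rw [gauss_fin hodd hprim _ _ ht]
        rw [Complex.norm_of_nonneg (by positivity)]
        rw [div_mul_eq_mul_div, one_mul, div_eq_div_iff hdR.ne' hsqrt_pos.ne']
        rw [one_mul, Real.mul_self_sqrt (le_of_lt hdR)]
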